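/- Let U, V in SpSt(2n,2k) such that I_{2k} + U^+V and I_{2k} + V^+U are invertible. Define A = 2((I + V^+U)^{-1} - (I + U^+V)^{-1}) and H = 2((V + U)(I + U^+V)^{-1} - U). Then A^+ = -A (A is Hamiltonian), U^+H = 0, and the Cayley retraction applied to Δ = UA + H returns V: -U + (H + 2U)((1/4)H^+H - (1/2)A + I_{2k})^{-1} = V. -/
import Mathlib


open Matrix

noncomputable section

/-- The standard symplectic matrix `J = [[0, I],[-I, 0]]` of size `2m`. -/
def Jmat (m : ℕ) : Matrix (Fin m ⊕ Fin m) (Fin m ⊕ Fin m) ℝ :=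
  Matrix.fromBlocks 0 1 (-1) 0

/-- The symplectic inverse `A⁺ = J₂ₖᵀ Aᵀ J₂ₙ` of a `2n × 2k` real matrix. -/
def sympInv {n k : ℕ} (A : Matrix (Fin n ⊕ Fin n) (Fin k ⊕ Fin k) ℝ) :
    Matrix (Fin k ⊕ Fin k) (Fin n ⊕ Fin n) ℝ :=
  (Jmat k)ᵀ * Aᵀ * Jmat n
lemma Jmat_transpose (m : ℕ) : (Jmat m)ᵀ = -Jmat m := by
  simp [Jmat, Matrix.fromBlocks_transpose, Matrix.fromBlocks_neg]

lemma Jmat_mul_Jmat (m : ℕ) : Jmat m * Jmat m = -1 := by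
  simp [Jmat, Matrix.fromBlocks_multiply, ← Matrix.fromBlocks_one, Matrix.fromBlocks_neg]

lemma Jmat_mul_transpose (m : ℕ) : Jmat m * (Jmat m)ᵀ = 1 := by
  rw [Jmat_transpose, Matrix.mul_neg, Jmat_mul_Jmat]; simp

lemma transpose_mul_Jmat (m : ℕ) : (Jmat m)ᵀ * Jmat m = 1 := by
  rw [Jmat_transpose, Matrix.neg_mul, Jmat_mul_Jmat]; simp

lemma sympInv_mul {a b c : ℕ} (M : Matrix (Fin a ⊕ Fin a) (Fin b ⊕ Fin b) ℝ)
    (N : Matrix (Fin b ⊕ Fin b) (Fin c ⊕ Fin c) ℝ) :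
    sympInv (M * N) = sympInv N * sympInv M := by
  simp only [sympInv, Matrix.transpose_mul, Matrix.mul_assoc]
  rw [← Matrix.mul_assoc (Jmat b) (Jmat b)ᵀ, Jmat_mul_transpose, Matrix.one_mul]

lemma sympInv_one {k : ℕ} : sympInv (1 : Matrix (Fin k ⊕ Fin k) (Fin k ⊕ Fin k) ℝ) = 1 := by
  simp [sympInv, transpose_mul_Jmat]

lemma sympInv_sympInv {n k : ℕ} (M : Matrix (Fin n ⊕ Fin n) (Fin k ⊕ Fin k) ℝ) :
    sympInv (sympInv M) = M := by
  simp only [sympInv, Matrix.transpose_mul, Matrix.transpose_transpose, Matrix.mul_assoc]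
  rw [Jmat_transpose]
  simp only [Matrix.neg_mul, Matrix.mul_neg, neg_neg]
  rw [Jmat_mul_Jmat]
  simp only [Matrix.mul_neg, Matrix.mul_one, Matrix.neg_mul, neg_neg, neg_inj]
  rw [← Matrix.mul_assoc, Jmat_mul_Jmat, Matrix.neg_mul, Matrix.one_mul]
  simp

lemma sympInv_add {n k : ℕ} (M N : Matrix (Fin n ⊕ Fin n) (Fin k ⊕ Fin k) ℝ) :
    sympInv (M + N) = sympInv M + sympInv N := by
  simp [sympInv, Matrix.transpose_add, Matrix.add_mul, Matrix.mul_add]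

lemma sympInv_sub {n k : ℕ} (M N : Matrix (Fin n ⊕ Fin n) (Fin k ⊕ Fin k) ℝ) :
    sympInv (M - N) = sympInv M - sympInv N := by
  simp [sympInv, Matrix.transpose_sub, Matrix.sub_mul, Matrix.mul_sub]

lemma sympInv_smul {n k : ℕ} (r : ℕ) (M : Matrix (Fin n ⊕ Fin n) (Fin k ⊕ Fin k) ℝ) :
    sympInv (r • M) = r • sympInv M := by
  simp [sympInv, Matrix.transpose_smul, Matrix.smul_mul, Matrix.mul_smul]

lemma sympInv_inv {k : ℕ} (X : Matrix (Fin k ⊕ Fin k) (Fin k ⊕ Fin k) ℝ) (h : IsUnit X) :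
    sympInv X⁻¹ = (sympInv X)⁻¹ := by
  have hd : IsUnit X.det := (Matrix.isUnit_iff_isUnit_det X).mp h
  symm
  apply Matrix.inv_eq_right_inv
  rw [← sympInv_mul, Matrix.nonsing_inv_mul X hd, sympInv_one]

theorem stmt_12 (n k : ℕ) (U V : Matrix (Fin n ⊕ Fin n) (Fin k ⊕ Fin k) ℝ)
    (hU : sympInv U * U = 1) (hV : sympInv V * V = 1)
    (h1 : IsUnit (1 + sympInv U * V)) (h2 : IsUnit (1 + sympInv V * U))
    (A : Matrix (Fin k ⊕ Fin k) (Fin k ⊕ Fin k) ℝ)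
    (hA : A = 2 • ((1 + sympInv V * U)⁻¹ - (1 + sympInv U * V)⁻¹))
    (H : Matrix (Fin n ⊕ Fin n) (Fin k ⊕ Fin k) ℝ)
    (hH : H = 2 • ((V + U) * (1 + sympInv U * V)⁻¹ - U)) :
    sympInv A = -A ∧ sympInv U * H = 0 ∧
    -U + (H + 2 • U) * ((1/4 : ℝ) • (sympInv H * H) - (1/2 : ℝ) • A + 1)⁻¹ = V := by
  set X := 1 + sympInv U * V with hX
  set Y := 1 + sympInv V * U with hY
  have hXY : sympInv X = Y := by
    rw [hX, hY, sympInv_add, sympInv_one, sympInv_mul, sympInv_sympInv]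
  have hYX : sympInv Y = X := by rw [← hXY, sympInv_sympInv]
  have hXd : IsUnit X.det := (Matrix.isUnit_iff_isUnit_det X).mp h1
  have hYd : IsUnit Y.det := (Matrix.isUnit_iff_isUnit_det Y).mp h2
  have hX1 : X * X⁻¹ = 1 := Matrix.mul_nonsing_inv X hXd
  have hX2 : X⁻¹ * X = 1 := Matrix.nonsing_inv_mul X hXd
  have hY2 : Y⁻¹ * Y = 1 := Matrix.nonsing_inv_mul Y hYd
  have hsX : sympInv X⁻¹ = Y⁻¹ := by rw [sympInv_inv X h1, hXY]
  have hsY : sympInv Y⁻¹ = X⁻¹ := by rw [sympInv_inv Y h2, hYX]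
  have hUS : sympInv U * (V + U) = X := by rw [Matrix.mul_add, hU, hX]; abel
  have hSU : (sympInv V + sympInv U) * U = Y := by rw [Matrix.add_mul, hU, hY]; abel
  have hSS : (sympInv V + sympInv U) * (V + U) = X + Y := by
    rw [Matrix.add_mul, Matrix.mul_add, Matrix.mul_add, hU, hV, hX, hY]; abel
  refine ⟨?_, ?_, ?_⟩
  · rw [hA, sympInv_smul, sympInv_sub, hsX, hsY]; abel
  · rw [hH, Matrix.mul_smul, Matrix.mul_sub, ← Matrix.mul_assoc, hUS, hX1, hU, sub_self, smul_zero]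
  · have hsH : sympInv H = 2 • (Y⁻¹ * (sympInv V + sympInv U) - sympInv U) := by
      rw [hH, sympInv_smul, sympInv_sub, sympInv_mul, hsX, sympInv_add]
    have p1 : (Y⁻¹ * (sympInv V + sympInv U)) * ((V + U) * X⁻¹) = Y⁻¹ + X⁻¹ := by
      calc (Y⁻¹ * (sympInv V + sympInv U)) * ((V + U) * X⁻¹)
          = Y⁻¹ * (((sympInv V + sympInv U) * (V + U)) * X⁻¹) := by
            simp only [Matrix.mul_assoc]
        _ = Y⁻¹ * (X * X⁻¹ + Y * X⁻¹) := by rw [hSS, Matrix.add_mul]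
        _ = Y⁻¹ * (1 + Y * X⁻¹) := by rw [hX1]
        _ = Y⁻¹ + (Y⁻¹ * Y) * X⁻¹ := by rw [Matrix.mul_add, Matrix.mul_one, Matrix.mul_assoc]
        _ = Y⁻¹ + X⁻¹ := by rw [hY2, Matrix.one_mul]
    have p2 : (Y⁻¹ * (sympInv V + sympInv U)) * U = 1 := by
      rw [Matrix.mul_assoc, hSU, hY2]
    have p3 : sympInv U * ((V + U) * X⁻¹) = 1 := by
      rw [← Matrix.mul_assoc, hUS, hX1]
    have hHH : sympInv H * H = 4 • (Y⁻¹ + X⁻¹ - 1) := by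
      rw [hsH, hH, Matrix.smul_mul, Matrix.mul_smul, smul_smul, show 2 * 2 = 4 from rfl]
      congr 1
      rw [Matrix.sub_mul, Matrix.mul_sub, Matrix.mul_sub, p1, p2, p3, hU]
      abel
    have hM : (1/4 : ℝ) • (sympInv H * H) - (1/2 : ℝ) • A + 1 = 2 • X⁻¹ := by
      rw [hHH, hA]; module
    have hMinv : ((1/4 : ℝ) • (sympInv H * H) - (1/2 : ℝ) • A + 1)⁻¹ = (1/2 : ℝ) • X := by
      rw [hM]
      apply Matrix.inv_eq_right_inv
      rw [Matrix.smul_mul, Matrix.mul_smul, hX2]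
      module
    have hH2 : H + 2 • U = 2 • ((V + U) * X⁻¹) := by rw [hH]; module
    rw [hMinv, hH2, Matrix.smul_mul, Matrix.mul_smul, Matrix.mul_assoc, hX2, Matrix.mul_one]
    module
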